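/- Let (V,∘) be a Novikov algebra over ℂ (possibly infinite-dimensional) such that every element of V is a finite sum of products y∘z with y, z ∈ V. Let α : V×V → ℂ[λ] be a bilinear map into polynomials in λ satisfying, for all a,b,c ∈ V and λ,μ ∈ ℂ: (S) α(a,b)(λ) = −α(b,a)(−λ), and (C₀) λ α(a, c∘b)(λ) + μ α(a, b∗c)(λ) − μ α(b, c∘a)(μ) − λ α(b, a∗c)(μ) = (−λ−μ) α(b∘a, c)(λ+μ) + λ α(a∗b, c)(λ+μ). Then there exist bilinear forms α_0, α_1, α_2, α_3 : V×V → ℂ with α(a,b)(λ) = Σ_{i=0}^3 λ^i α_i(a,b) for all a,b ∈ V and λ ∈ ℂ, and the identities (N1)–(N5) hold for all a, b, c ∈ V. -/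

import Mathlib

set_option maxHeartbeats 1000000

open Polynomial

private lemma ch2C (n : ℕ) : ((n.choose 2 : ℕ) : ℂ) * 2 = (n:ℂ) * ((n:ℂ) - 1) := by
  rw [Nat.cast_choose_two]; ring

private lemma ch3C (n : ℕ) (hn : 2 ≤ n) :
    ((n.choose 3 : ℕ) : ℂ) * 6 = (n:ℂ) * ((n:ℂ) - 1) * ((n:ℂ) - 2) := by
  have h1 : n.descFactorial 3 = 6 * n.choose 3 := by
    simpa [Nat.factorial] using Nat.descFactorial_eq_factorial_mul_choose n 3
  have h2 : n.descFactorial 3 = (n-2) * ((n-1) * n) := by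
    simp [Nat.descFactorial_succ, Nat.descFactorial_zero, Nat.descFactorial_one]
  rw [h2] at h1
  have h3 := congrArg (fun x : ℕ => (x : ℂ)) h1
  push_cast [Nat.cast_sub (by omega : 2 ≤ n), Nat.cast_sub (by omega : 1 ≤ n)] at h3
  linear_combination -h3

private lemma aux_deg (Cp Dp P Q : Polynomial ℂ) (w1 w2 : ℂ → ℂ)
    (st : ∀ l : ℂ, C (w1 l) + C (w2 l) * X - X * Cp - C l * Dp
      = - C l * (taylor l P) - X * (taylor l P) + C l * (taylor l Q)) :
    ∀ n : ℕ, 4 ≤ n → P.coeff n = 0 := by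
  have h2 : ∀ l : ℂ, -(Cp.coeff 1) - l * Dp.coeff 2
      = -l * (hasseDeriv 2 P).eval l - (hasseDeriv 1 P).eval l + l * (hasseDeriv 2 Q).eval l := by
    intro l
    have h := congrArg (fun p => Polynomial.coeff p 2) (st l)
    simpa [coeff_X_mul, taylor_coeff, -hasseDeriv_one] using h
  have h3 : ∀ l : ℂ, -(Cp.coeff 2) - l * Dp.coeff 3
      = -l * (hasseDeriv 3 P).eval l - (hasseDeriv 2 P).eval l + l * (hasseDeriv 3 Q).eval l := by
    intro l
    have h := congrArg (fun p => Polynomial.coeff p 3) (st l)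
    simpa [coeff_X_mul, taylor_coeff, -hasseDeriv_one] using h
  have p2 : -C (Cp.coeff 1) - C (Dp.coeff 2) * X
      = -X * hasseDeriv 2 P - hasseDeriv 1 P + X * hasseDeriv 2 Q := by
    apply Polynomial.funext; intro l
    simp only [eval_add, eval_sub, eval_neg, eval_mul, eval_C, eval_X]
    linear_combination h2 l
  have p3 : -C (Cp.coeff 2) - C (Dp.coeff 3) * X
      = -X * hasseDeriv 3 P - hasseDeriv 2 P + X * hasseDeriv 3 Q := by
    apply Polynomial.funext; intro l
    simp only [eval_add, eval_sub, eval_neg, eval_mul, eval_C, eval_X]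
    linear_combination h3 l
  intro n hn
  obtain ⟨k, rfl⟩ : ∃ k, n = k + 4 := ⟨n - 4, by omega⟩
  have e2 : (0:ℂ) = -(((k+4).choose 2 : ℕ) : ℂ) * P.coeff (k+4)
      - (((k+4) : ℕ) : ℂ) * P.coeff (k+4) + (((k+4).choose 2 : ℕ) : ℂ) * Q.coeff (k+4) := by
    have h := congrArg (fun p => Polynomial.coeff p (k+3)) p2
    simp only [coeff_add, coeff_sub, coeff_neg, neg_mul, coeff_C_mul, coeff_X_mul, coeff_C,
      hasseDeriv_coeff, coeff_X, coeff_mul_X] at h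
    norm_num [Nat.add_assoc, Nat.choose_one_right] at h ⊢
    linear_combination h
  have e3 : (0:ℂ) = -(((k+4).choose 3 : ℕ) : ℂ) * P.coeff (k+4)
      - (((k+4).choose 2 : ℕ) : ℂ) * P.coeff (k+4) + (((k+4).choose 3 : ℕ) : ℂ) * Q.coeff (k+4) := by
    have h := congrArg (fun p => Polynomial.coeff p (k+2)) p3
    simp only [coeff_add, coeff_sub, coeff_neg, neg_mul, coeff_C_mul, coeff_X_mul, coeff_C,
      hasseDeriv_coeff, coeff_X, coeff_mul_X] at h
    norm_num [Nat.add_assoc] at h ⊢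
    linear_combination h
  have hch2 := ch2C (k+4)
  have hch3 := ch3C (k+4) (by omega)
  have hkey : (((k+4:ℕ):ℂ)^2 * (((k+4:ℕ):ℂ) - 1) * (((k+4:ℕ):ℂ) + 1)) * P.coeff (k+4) = 0 := by
    linear_combination (-12 * (((k+4).choose 3:ℕ):ℂ)) * e2 + (12 * (((k+4).choose 2:ℕ):ℂ)) * e3
      + (2 * ((k+4:ℕ):ℂ) * P.coeff (k+4)) * hch3
      + (-3 * P.coeff (k+4)
          * (2 * (((k+4).choose 2:ℕ):ℂ) + ((k+4:ℕ):ℂ) * (((k+4:ℕ):ℂ) - 1))) * hch2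
  have h0 : ((k+4:ℕ):ℂ) ≠ 0 := Nat.cast_ne_zero.mpr (by omega)
  have h1 : ((k+4:ℕ):ℂ) - 1 ≠ 0 := by
    have hx : ((k+3:ℕ):ℂ) ≠ 0 := Nat.cast_ne_zero.mpr (by omega)
    intro h; apply hx; push_cast at h ⊢; linear_combination h
  have h2' : ((k+4:ℕ):ℂ) + 1 ≠ 0 := by
    have hx : ((k+5:ℕ):ℂ) ≠ 0 := Nat.cast_ne_zero.mpr (by omega)
    intro h; apply hx; push_cast at h ⊢; linear_combination h
  have hnz : (((k+4:ℕ):ℂ)^2 * (((k+4:ℕ):ℂ) - 1) * (((k+4:ℕ):ℂ) + 1)) ≠ 0 :=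
    mul_ne_zero (mul_ne_zero (pow_ne_zero 2 h0) h1) h2'
  exact (mul_eq_zero.mp hkey).resolve_left hnz


theorem stmt_3 {V : Type*} [AddCommGroup V] [Module ℂ V]
    (circ : V →ₗ[ℂ] V →ₗ[ℂ] V)
    -- Novikov algebra axioms for `∘ = circ`
    (hNov1 : ∀ a b c : V, circ (circ a b) c - circ a (circ b c)
      = circ (circ b a) c - circ b (circ a c))
    (hNov2 : ∀ a b c : V, circ (circ a b) c = circ (circ a c) b)
    -- every element of `V` is a finite sum of products `y ∘ z`
    (hspan : AddSubmonoid.closure {x : V | ∃ u v : V, circ u v = x} = ⊤)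
    (α : V →ₗ[ℂ] V →ₗ[ℂ] Polynomial ℂ)
    -- condition (S)
    (hS : ∀ (a b : V) (l : ℂ), (α a b).eval l = - (α b a).eval (-l))
    -- condition (C₀)
    (hC : ∀ (a b c : V) (l m : ℂ),
      l * (α a (circ c b)).eval l
        + m * (α a (circ b c + circ c b)).eval l
        - m * (α b (circ c a)).eval m
        - l * (α b (circ a c + circ c a)).eval m
      = (-l - m) * (α (circ b a) c).eval (l + m)
        + l * (α (circ a b + circ b a) c).eval (l + m)) :
    ∃ α0 α1 α2 α3 : V →ₗ[ℂ] V →ₗ[ℂ] ℂ,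
      (∀ (a b : V) (l : ℂ),
        (α a b).eval l = α0 a b + l * α1 a b + l ^ 2 * α2 a b + l ^ 3 * α3 a b)
      -- (N1): `α_i(a,b) = (−1)^{i+1} α_i(b,a)` for `i = 0, 1, 2, 3`
      ∧ (∀ a b : V, α0 a b = - α0 b a)
      ∧ (∀ a b : V, α1 a b = α1 b a)
      ∧ (∀ a b : V, α2 a b = - α2 b a)
      ∧ (∀ a b : V, α3 a b = α3 b a)
      -- (N2)
      ∧ (∀ a b c : V, α3 a (circ c b) = α3 (circ a b) c ∧ α3 (circ a b) c = α3 (circ b a) c)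
      -- (N3)
      ∧ (∀ a b c : V, α2 a (circ b c) + α2 (circ b a) c = α2 (circ a b) c
          ∧ α2 (circ a b) c = α2 a (circ c b))
      -- (N4)
      ∧ (∀ a b c : V, α1 a (circ c b) = α1 (circ a b) c)
      -- (N5)
      ∧ (∀ a b c : V, α0 (circ c a) b - α0 (circ c b) a
          = α0 (circ a b) c - α0 (circ a c) b) := by
  -- Step 1: the master polynomial identity (in the variable `m`), for each fixed `l`.
  have star : ∀ (a b c : V) (l : ℂ),
      C (l * (α a (circ c b)).eval l)
        + C ((α a (circ b c + circ c b)).eval l) * X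
        - X * (α b (circ c a))
        - C l * (α b (circ a c + circ c a))
      = - C l * (taylor l (α (circ b a) c))
        - X * (taylor l (α (circ b a) c))
        + C l * (taylor l (α (circ a b + circ b a) c)) := by
    intro a b c l
    apply Polynomial.funext
    intro m
    have h := hC a b c l m
    rw [add_comm l m] at h
    simp only [eval_add, eval_sub, eval_mul, eval_neg, eval_C, eval_X, taylor_eval]
    linear_combination h
  -- Steps 2/3: products have degree ≤ 3.
  have hP : ∀ (a b c : V) (n : ℕ), 4 ≤ n → (α (circ b a) c).coeff n = 0 := by
    intro a b c
    exact aux_deg (α b (circ c a)) (α b (circ a c + circ c a))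
      (α (circ b a) c) (α (circ a b + circ b a) c)
      (fun l => l * (α a (circ c b)).eval l) (fun l => (α a (circ b c + circ c b)).eval l)
      (fun l => star a b c l)
  -- Step 4: all values of α have degree ≤ 3 (via the spanning hypothesis).
  have hdeg : ∀ (x y : V) (n : ℕ), 4 ≤ n → (α x y).coeff n = 0 := by
    intro x y n hn
    have hx : x ∈ AddSubmonoid.closure {x : V | ∃ u v : V, circ u v = x} := by
      rw [hspan]; trivial
    induction hx using AddSubmonoid.closure_induction with
    | mem z hz => obtain ⟨u, v, rfl⟩ := hz; exact hP v u y n hn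
    | zero => simp
    | add z w _ _ hz hw => simp [map_add, LinearMap.add_apply, coeff_add, hz, hw]
  -- Step 5: the evaluation formula.
  have heval : ∀ (x y : V) (t : ℂ), (α x y).eval t
      = (α x y).coeff 0 + t * (α x y).coeff 1 + t^2 * (α x y).coeff 2 + t^3 * (α x y).coeff 3 := by
    intro x y t
    have hlt : (α x y).natDegree < 4 := by
      by_contra h
      push_neg at h
      have h0 : (α x y).coeff (α x y).natDegree = 0 := hdeg x y _ h
      have hz : α x y = 0 := Polynomial.leadingCoeff_eq_zero.mp h0
      rw [hz] at h; simp at h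
    rw [Polynomial.eval_eq_sum_range' hlt]
    simp [Finset.sum_range_succ]
    ring
  -- Step 6: the skew-symmetry relations from (S).
  have hsS : ∀ (a b : V) (l : ℂ),
      (α a b).coeff 0 + l * (α a b).coeff 1 + l^2 * (α a b).coeff 2 + l^3 * (α a b).coeff 3
      = -((α b a).coeff 0 + (-l) * (α b a).coeff 1 + (-l)^2 * (α b a).coeff 2
          + (-l)^3 * (α b a).coeff 3) := by
    intro a b l
    have h := hS a b l
    rw [heval, heval] at h
    exact h
  have hsk0 : ∀ a b : V, (α a b).coeff 0 = -(α b a).coeff 0 := by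
    intro a b; linear_combination hsS a b 0
  have hsk1 : ∀ a b : V, (α a b).coeff 1 = (α b a).coeff 1 := by
    intro a b; linear_combination (-1/2 : ℂ) * hsS a b 0 + (1 : ℂ) * hsS a b 1 + (-1/3 : ℂ) * hsS a b (-1) + (-1/6 : ℂ) * hsS a b 2
  have hsk2 : ∀ a b : V, (α a b).coeff 2 = -(α b a).coeff 2 := by
    intro a b; linear_combination (-1 : ℂ) * hsS a b 0 + (1/2 : ℂ) * hsS a b 1 + (1/2 : ℂ) * hsS a b (-1)
  have hsk3 : ∀ a b : V, (α a b).coeff 3 = (α b a).coeff 3 := by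
    intro a b; linear_combination (1/2 : ℂ) * hsS a b 0 + (-1/2 : ℂ) * hsS a b 1 + (-1/6 : ℂ) * hsS a b (-1) + (1/6 : ℂ) * hsS a b 2
  -- Step 7: the expanded form of (C₀) with coefficients.
  have hE : ∀ (a b c : V) (l m : ℂ),
      l * ((α a (circ c b)).coeff 0 + l * (α a (circ c b)).coeff 1
          + l^2 * (α a (circ c b)).coeff 2 + l^3 * (α a (circ c b)).coeff 3)
        + m * (((α a (circ b c)).coeff 0 + l * (α a (circ b c)).coeff 1
            + l^2 * (α a (circ b c)).coeff 2 + l^3 * (α a (circ b c)).coeff 3)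
          + ((α a (circ c b)).coeff 0 + l * (α a (circ c b)).coeff 1
            + l^2 * (α a (circ c b)).coeff 2 + l^3 * (α a (circ c b)).coeff 3))
        - m * ((α b (circ c a)).coeff 0 + m * (α b (circ c a)).coeff 1
            + m^2 * (α b (circ c a)).coeff 2 + m^3 * (α b (circ c a)).coeff 3)
        - l * (((α b (circ a c)).coeff 0 + m * (α b (circ a c)).coeff 1
            + m^2 * (α b (circ a c)).coeff 2 + m^3 * (α b (circ a c)).coeff 3)
          + ((α b (circ c a)).coeff 0 + m * (α b (circ c a)).coeff 1
            + m^2 * (α b (circ c a)).coeff 2 + m^3 * (α b (circ c a)).coeff 3))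
      = (-l - m) * ((α (circ b a) c).coeff 0 + (l+m) * (α (circ b a) c).coeff 1
            + (l+m)^2 * (α (circ b a) c).coeff 2 + (l+m)^3 * (α (circ b a) c).coeff 3)
        + l * (((α (circ a b) c).coeff 0 + (l+m) * (α (circ a b) c).coeff 1
            + (l+m)^2 * (α (circ a b) c).coeff 2 + (l+m)^3 * (α (circ a b) c).coeff 3)
          + ((α (circ b a) c).coeff 0 + (l+m) * (α (circ b a) c).coeff 1
            + (l+m)^2 * (α (circ b a) c).coeff 2 + (l+m)^3 * (α (circ b a) c).coeff 3)) := by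
    intro a b c l m
    have h := hC a b c l m
    simp only [map_add, LinearMap.add_apply, eval_add] at h
    simp only [heval] at h
    linear_combination h
  -- Step 8: the coefficient identities.
  have hT10 : ∀ a b c : V, (α a (circ c b)).coeff 0 - (α b (circ a c)).coeff 0 - (α b (circ c a)).coeff 0 = (α (circ a b) c).coeff 0 := by
    intro a b c
    linear_combination (-25/12 : ℂ) * hE a b c 0 0
      + (4 : ℂ) * hE a b c 1 0
      + (-3 : ℂ) * hE a b c 2 0
      + (4/3 : ℂ) * hE a b c 3 0
      + (-1/4 : ℂ) * hE a b c 4 0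
  have hT02 : ∀ a b c : V, (α b (circ c a)).coeff 1 = (α (circ b a) c).coeff 1 := by
    intro a b c
    linear_combination (-35/24 : ℂ) * hE a b c 0 0
      + (13/3 : ℂ) * hE a b c 0 1
      + (-19/4 : ℂ) * hE a b c 0 2
      + (7/3 : ℂ) * hE a b c 0 3
      + (-11/24 : ℂ) * hE a b c 0 4
  have hT21 : ∀ a b c : V, (α a (circ b c)).coeff 2 + (α a (circ c b)).coeff 2 = -(α (circ b a) c).coeff 2 + 2 * (α (circ a b) c).coeff 2 := by
    intro a b c
    linear_combination (-875/288 : ℂ) * hE a b c 0 0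
      + (35/6 : ℂ) * hE a b c 0 1
      + (-35/8 : ℂ) * hE a b c 0 2
      + (35/18 : ℂ) * hE a b c 0 3
      + (-35/96 : ℂ) * hE a b c 0 4
      + (325/36 : ℂ) * hE a b c 1 0
      + (-52/3 : ℂ) * hE a b c 1 1
      + (13 : ℂ) * hE a b c 1 2
      + (-52/9 : ℂ) * hE a b c 1 3
      + (13/12 : ℂ) * hE a b c 1 4
      + (-475/48 : ℂ) * hE a b c 2 0
      + (19 : ℂ) * hE a b c 2 1
      + (-57/4 : ℂ) * hE a b c 2 2
      + (19/3 : ℂ) * hE a b c 2 3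
      + (-19/16 : ℂ) * hE a b c 2 4
      + (175/36 : ℂ) * hE a b c 3 0
      + (-28/3 : ℂ) * hE a b c 3 1
      + (7 : ℂ) * hE a b c 3 2
      + (-28/9 : ℂ) * hE a b c 3 3
      + (7/12 : ℂ) * hE a b c 3 4
      + (-275/288 : ℂ) * hE a b c 4 0
      + (11/6 : ℂ) * hE a b c 4 1
      + (-11/8 : ℂ) * hE a b c 4 2
      + (11/18 : ℂ) * hE a b c 4 3
      + (-11/96 : ℂ) * hE a b c 4 4
  have hT03 : ∀ a b c : V, (α b (circ c a)).coeff 2 = (α (circ b a) c).coeff 2 := by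
    intro a b c
    linear_combination (5/12 : ℂ) * hE a b c 0 0
      + (-3/2 : ℂ) * hE a b c 0 1
      + (2 : ℂ) * hE a b c 0 2
      + (-7/6 : ℂ) * hE a b c 0 3
      + (1/4 : ℂ) * hE a b c 0 4
  have hT22 : ∀ a b c : V, (α (circ a b) c).coeff 3 = (α (circ b a) c).coeff 3 := by
    intro a b c
    linear_combination (-1225/1728 : ℂ) * hE a b c 0 0
      + (455/216 : ℂ) * hE a b c 0 1
      + (-665/288 : ℂ) * hE a b c 0 2
      + (245/216 : ℂ) * hE a b c 0 3
      + (-385/1728 : ℂ) * hE a b c 0 4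
      + (455/216 : ℂ) * hE a b c 1 0
      + (-169/27 : ℂ) * hE a b c 1 1
      + (247/36 : ℂ) * hE a b c 1 2
      + (-91/27 : ℂ) * hE a b c 1 3
      + (143/216 : ℂ) * hE a b c 1 4
      + (-665/288 : ℂ) * hE a b c 2 0
      + (247/36 : ℂ) * hE a b c 2 1
      + (-361/48 : ℂ) * hE a b c 2 2
      + (133/36 : ℂ) * hE a b c 2 3
      + (-209/288 : ℂ) * hE a b c 2 4
      + (245/216 : ℂ) * hE a b c 3 0
      + (-91/27 : ℂ) * hE a b c 3 1
      + (133/36 : ℂ) * hE a b c 3 2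
      + (-49/27 : ℂ) * hE a b c 3 3
      + (77/216 : ℂ) * hE a b c 3 4
      + (-385/1728 : ℂ) * hE a b c 4 0
      + (143/216 : ℂ) * hE a b c 4 1
      + (-209/288 : ℂ) * hE a b c 4 2
      + (77/216 : ℂ) * hE a b c 4 3
      + (-121/1728 : ℂ) * hE a b c 4 4
  have hT04 : ∀ a b c : V, (α b (circ c a)).coeff 3 = (α (circ b a) c).coeff 3 := by
    intro a b c
    linear_combination (-1/24 : ℂ) * hE a b c 0 0
      + (1/6 : ℂ) * hE a b c 0 1
      + (-1/4 : ℂ) * hE a b c 0 2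
      + (1/6 : ℂ) * hE a b c 0 3
      + (-1/24 : ℂ) * hE a b c 0 4
  -- Step 9: assemble.
  refine ⟨α.compr₂ (lcoeff ℂ 0), α.compr₂ (lcoeff ℂ 1), α.compr₂ (lcoeff ℂ 2),
    α.compr₂ (lcoeff ℂ 3), ?_, ?_, ?_, ?_, ?_, ?_, ?_, ?_, ?_⟩ <;>
    simp only [LinearMap.compr₂_apply, lcoeff_apply]
  · exact heval
  · exact hsk0
  · exact hsk1
  · exact hsk2
  · exact hsk3
  · exact fun a b c => ⟨hT04 b a c, hT22 a b c⟩
  · refine fun a b c => ⟨?_, (hT03 b a c).symm⟩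
    linear_combination hT21 a b c - hT03 b a c
  · exact fun a b c => hT02 b a c
  · intro a b c
    linear_combination hT10 a b c + hsk0 (circ c a) b - hsk0 (circ c b) a + hsk0 (circ a c) b
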